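/- For every λ ≥ 1 there exists β ≥ 1 with the following property. Let (b_j) be a (finite or infinite) sequence in a real Banach space and let (e_j) be its difference sequence, i.e. e_1 = b_1 and e_j = b_j − b_{j−1} for j > 1. Then: (a) if (b_j) is λ-wide-(s), then (e_j) is β-wide-(c); (b) if (e_j) is λ-wide-(c), then (b_j) is β-wide-(s). -/
import Mathlib


open Finset Filter Metric NormedSpace

noncomputable section

universe u

variable {X Y : Type*} [NormedAddCommGroup X] [NormedSpace ℝ X]
  [NormedAddCommGroup Y] [NormedSpace ℝ Y]

/-- `b` is a `lam`-basic sequence of length `N` (with `N = ⊤` the infinite case). -/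
def IsBasicLen (lam : ℝ) (N : ℕ∞) (b : ℕ → X) : Prop :=
  ∀ (c : ℕ → ℝ) (k n : ℕ), k ≤ n → (n : ℕ∞) ≤ N →
    ‖∑ j ∈ Finset.range k, c j • b j‖ ≤ lam * ‖∑ j ∈ Finset.range n, c j • b j‖

/-- `b` is a `lam`-wide-(s) sequence of length `N` (with `N = ⊤` the infinite case). -/
def IsWideSLen (lam : ℝ) (N : ℕ∞) (b : ℕ → X) : Prop :=
  IsBasicLen (2 * lam) N b ∧ (∀ j : ℕ, (j : ℕ∞) < N → ‖b j‖ ≤ lam) ∧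
    ∀ (c : ℕ → ℝ) (k n : ℕ), k ≤ n → (n : ℕ∞) ≤ N →
      |∑ j ∈ Finset.Ico k n, c j| ≤ lam * ‖∑ j ∈ Finset.range n, c j • b j‖

/-- `e` is a `lam`-wide-(c) sequence of length `N` (with `N = ⊤` the infinite case). -/
def IsWideCLen (lam : ℝ) (N : ℕ∞) (e : ℕ → X) : Prop :=
  IsBasicLen lam N e ∧ (∀ j : ℕ, (j : ℕ∞) < N → 1 / lam ≤ ‖e j‖) ∧
    ∀ k : ℕ, (k : ℕ∞) ≤ N → ‖∑ j ∈ Finset.range k, e j‖ ≤ lam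

lemma enat_lt_iff' {j : ℕ} {N : ℕ∞} : (j:ℕ∞) < N ↔ ((j+1:ℕ):ℕ∞) ≤ N := by
  cases N with
  | top => simp
  | coe n => rw [Nat.cast_lt, Nat.cast_le]; omega

lemma tel_sum' (f : ℕ → ℝ) {j n : ℕ} (h : j ≤ n) :
    ∑ i ∈ Finset.Ico j n, (f i - f (i+1)) = f j - f n := by
  induction n, h using Nat.le_induction with
  | base => simp
  | succ n hn ih => rw [Finset.sum_Ico_succ_top hn, ih]; ring

omit [NormedSpace ℝ Y] in
lemma psum' (b e : ℕ → X) (h0 : e 0 = b 0) (hs : ∀ j, e (j+1) = b (j+1) - b j) :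
    ∀ i, ∑ j ∈ Finset.range (i+1), e j = b i := by
  intro i
  induction i with
  | zero => simpa using h0
  | succ i ih => rw [Finset.sum_range_succ, ih, hs]; abel

lemma key_sum' (b e : ℕ → X) (hb : ∀ i, ∑ j ∈ Finset.range (i+1), e j = b i)
    (c : ℕ → ℝ) (n : ℕ) :
    ∑ i ∈ Finset.range n, (∑ j ∈ Finset.Ico i n, c j) • e i
      = ∑ j ∈ Finset.range n, c j • b j := by
  have h1 : ∀ i ∈ Finset.range n, (∑ j ∈ Finset.Ico i n, c j) • e i
      = ∑ j ∈ Finset.Ico i n, c j • e i := fun i _ => Finset.sum_smul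
  rw [Finset.sum_congr rfl h1, Finset.range_eq_Ico, Finset.sum_Ico_Ico_comm]
  refine Finset.sum_congr rfl fun j _ => ?_
  rw [← Finset.range_eq_Ico, ← Finset.smul_sum, hb j]

/-- for every `lam ≥ 1` there is `β ≥ 1` such that for any (finite or
infinite) sequence `b` in a Banach space with difference sequence `e`:
if `b` is `lam`-wide-(s) then `e` is `β`-wide-(c), and if `e` is `lam`-wide-(c)
then `b` is `β`-wide-(s). -/
theorem stmt_8 (lam : ℝ) (hlam : 1 ≤ lam) :
    ∃ β : ℝ, 1 ≤ β ∧
      ∀ (X : Type u) [NormedAddCommGroup X] [NormedSpace ℝ X] [CompleteSpace X],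
        ∀ (N : ℕ∞) (b e : ℕ → X), e 0 = b 0 → (∀ j : ℕ, e (j + 1) = b (j + 1) - b j) →
          (IsWideSLen lam N b → IsWideCLen β N e) ∧
          (IsWideCLen lam N e → IsWideSLen β N b) := by
  classical
  have hl0 : (0:ℝ) < lam := lt_of_lt_of_le one_pos hlam
  have h1l : lam ≤ lam^2 := by nlinarith
  have h2l : lam^2 ≤ lam^3 := by
    nlinarith [mul_nonneg (mul_nonneg hl0.le hl0.le) (sub_nonneg.mpr hlam)]
  have h3l : (0:ℝ) < lam^3 := pow_pos hl0 3
  have hll : lam ≤ 8 * lam^3 := by linarith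
  refine ⟨8 * lam^3, by linarith, ?_⟩
  intro X _ _ _ N b e h0 hs
  have hb := psum' b e h0 hs
  constructor
  · -- (a) wide-(s) → wide-(c)
    rintro ⟨hbasic, hnorm, hcond⟩
    -- partial sums of e are bounded by lam
    have hps : ∀ k : ℕ, (k:ℕ∞) ≤ N → ‖∑ j ∈ Finset.range k, e j‖ ≤ lam := by
      intro k hk
      cases k with
      | zero => simp; linarith
      | succ m =>
        rw [hb m]
        refine hnorm m (lt_of_lt_of_le ?_ hk)
        exact_mod_cast Nat.lt_succ_self m
    -- lower bound for norms of e
    have helow : ∀ j : ℕ, (j:ℕ∞) < N → 1/lam ≤ ‖e j‖ := by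
      intro j hj
      have hj' : ((j+1:ℕ):ℕ∞) ≤ N := enat_lt_iff'.mp hj
      rw [div_le_iff₀ hl0]
      cases j with
      | zero =>
        have h1 := hcond (fun i => if i = 0 then 1 else 0) 0 1 (by omega) hj'
        simp [h0] at h1
        rw [h0]
        linarith [h1, mul_comm lam ‖b 0‖]
      | succ m =>
        have h1 := hcond (fun i => if i = m+1 then 1 else if i = m then -1 else 0)
          (m+1) (m+2) (by omega) (by exact_mod_cast hj')
        have hA : ∑ j ∈ Finset.Ico (m+1) (m+2),
            (if j = m+1 then (1:ℝ) else if j = m then -1 else 0) = 1 := by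
          rw [Nat.Ico_succ_singleton, Finset.sum_singleton]; simp
        have hB : ∑ j ∈ Finset.range (m+2),
            (if j = m+1 then (1:ℝ) else if j = m then -1 else 0) • b j = e (m+1) := by
          rw [Finset.sum_range_succ, Finset.sum_range_succ,
            Finset.sum_eq_zero (fun i hi => ?_), hs]
          · simp; abel
          · have : i ≠ m + 1 ∧ i ≠ m := by
              have := Finset.mem_range.mp hi; omega
            simp [this.1, this.2]
        rw [hA, hB] at h1
        simpa [abs_one, mul_comm] using h1
    -- e is basic with constant 8*lam^3
    have hebasic : IsBasicLen (8*lam^3) N e := by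
      intro c k n hkn hnN
      set c' : ℕ → ℝ := fun j => if j < n then c j else 0 with hc'
      have hcn : c' n = 0 := by simp [hc']
      have hkey : ∀ m, m ≤ n → (∑ j ∈ Finset.range m, (c' j - c' (j+1)) • b j)
          = (∑ i ∈ Finset.range m, c' i • e i) - c' m • ∑ i ∈ Finset.range m, e i := by
        intro m hm
        calc ∑ j ∈ Finset.range m, (c' j - c' (j+1)) • b j
            = ∑ i ∈ Finset.range m,
                (∑ j ∈ Finset.Ico i m, (c' j - c' (j+1))) • e i :=
              (key_sum' b e hb _ m).symm
          _ = ∑ i ∈ Finset.range m, (c' i - c' m) • e i :=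
              Finset.sum_congr rfl fun i hi => by
                rw [tel_sum' c' (le_of_lt (Finset.mem_range.mp hi))]
          _ = (∑ i ∈ Finset.range m, c' i • e i) - c' m • ∑ i ∈ Finset.range m, e i := by
              simp [sub_smul, Finset.sum_sub_distrib, Finset.smul_sum]
      have hSn : ∑ j ∈ Finset.range n, (c' j - c' (j+1)) • b j
          = ∑ i ∈ Finset.range n, c i • e i := by
        rw [hkey n le_rfl, hcn, zero_smul, sub_zero]
        exact Finset.sum_congr rfl fun i hi => by
          rw [hc']; simp [Finset.mem_range.mp hi]
      have hSk : ∑ i ∈ Finset.range k, c i • e i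
          = (∑ j ∈ Finset.range k, (c' j - c' (j+1)) • b j) + c' k • ∑ i ∈ Finset.range k, e i := by
        rw [hkey k hkn, sub_add_cancel]
        exact Finset.sum_congr rfl fun i hi => by
          rw [hc']; simp [lt_of_lt_of_le (Finset.mem_range.mp hi) hkn]
      have h1 := hbasic (fun j => c' j - c' (j+1)) k n hkn hnN
      rw [hSn] at h1
      have h2 := hcond (fun j => c' j - c' (j+1)) k n hkn hnN
      rw [hSn, tel_sum' c' hkn, hcn, sub_zero] at h2
      have h3 := hps k (le_trans (Nat.cast_le.mpr hkn) hnN)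
      have h4 : ‖c' k • ∑ i ∈ Finset.range k, e i‖ ≤ |c' k| * lam := by
        rw [norm_smul, Real.norm_eq_abs]
        exact mul_le_mul_of_nonneg_left h3 (abs_nonneg _)
      calc ‖∑ i ∈ Finset.range k, c i • e i‖
          ≤ ‖∑ j ∈ Finset.range k, (c' j - c' (j+1)) • b j‖
            + ‖c' k • ∑ i ∈ Finset.range k, e i‖ := by rw [hSk]; exact norm_add_le _ _
        _ ≤ 8*lam^3 * ‖∑ i ∈ Finset.range n, c i • e i‖ := by
            nlinarith [norm_nonneg (∑ i ∈ Finset.range n, c i • e i), abs_nonneg (c' k),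
              mul_le_mul_of_nonneg_right h2 hl0.le,
              mul_nonneg (show (0:ℝ) ≤ 8*lam^3 - 2*lam - lam^2 by linarith)
                (norm_nonneg (∑ i ∈ Finset.range n, c i • e i))]
    refine ⟨hebasic, fun j hj => le_trans ?_ (helow j hj), fun k hk => le_trans (hps k hk) hll⟩
    exact one_div_le_one_div_of_le hl0 hll
  · -- (b) wide-(c) → wide-(s)
    rintro ⟨hbasic, hlow, hsum⟩
    have hnormb : ∀ j : ℕ, (j:ℕ∞) < N → ‖b j‖ ≤ lam := fun j hj => by
      rw [← hb j]; exact hsum (j+1) (by exact_mod_cast enat_lt_iff'.mp hj)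
    have hcondb : ∀ (c : ℕ → ℝ) (k n : ℕ), k ≤ n → (n:ℕ∞) ≤ N →
        |∑ j ∈ Finset.Ico k n, c j| ≤ 2*lam^2 * ‖∑ j ∈ Finset.range n, c j • b j‖ := by
      intro c k n hkn hnN
      rcases eq_or_lt_of_le hkn with rfl | hklt
      · simp; positivity
      · have hS := key_sum' b e hb c n
        have h1 := hbasic (fun i => ∑ j ∈ Finset.Ico i n, c j) (k+1) n hklt hnN
        have h2 := hbasic (fun i => ∑ j ∈ Finset.Ico i n, c j) k n hkn hnN
        rw [hS] at h1 h2
        have h3 : ‖(∑ j ∈ Finset.Ico k n, c j) • e k‖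
            ≤ 2*lam*‖∑ j ∈ Finset.range n, c j • b j‖ := by
          have heq : (∑ j ∈ Finset.Ico k n, c j) • e k
              = (∑ i ∈ Finset.range (k+1), (∑ j ∈ Finset.Ico i n, c j) • e i)
                - ∑ i ∈ Finset.range k, (∑ j ∈ Finset.Ico i n, c j) • e i := by
            rw [Finset.sum_range_succ]; abel
          rw [heq]
          refine (norm_sub_le _ _).trans ?_
          linarith
        have h4 : 1/lam ≤ ‖e k‖ := hlow k (lt_of_lt_of_le (Nat.cast_lt.mpr hklt) hnN)
        rw [norm_smul, Real.norm_eq_abs] at h3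
        have h5 : |∑ j ∈ Finset.Ico k n, c j| * (1/lam)
            ≤ 2*lam*‖∑ j ∈ Finset.range n, c j • b j‖ :=
          le_trans (mul_le_mul_of_nonneg_left h4 (abs_nonneg _)) h3
        rw [mul_one_div, div_le_iff₀ hl0] at h5
        nlinarith [h5]
    refine ⟨?_, fun j hj => le_trans (hnormb j hj) hll,
      fun c k n hkn hnN => le_trans (hcondb c k n hkn hnN)
        (mul_le_mul_of_nonneg_right (by linarith) (norm_nonneg _))⟩
    intro c k n hkn hnN
    have hTb := hcondb c k n hkn hnN
    have hkey : ∑ j ∈ Finset.range k, c j • b j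
        = (∑ i ∈ Finset.range k, (∑ j ∈ Finset.Ico i n, c j) • e i)
          - (∑ j ∈ Finset.Ico k n, c j) • ∑ i ∈ Finset.range k, e i := by
      rw [← key_sum' b e hb c k, Finset.smul_sum, ← Finset.sum_sub_distrib]
      refine Finset.sum_congr rfl fun i hi => ?_
      rw [← sub_smul]
      congr 1
      have := Finset.sum_Ico_consecutive c
        (le_of_lt (Finset.mem_range.mp hi) : i ≤ k) hkn
      linarith
    have h1 := hbasic (fun i => ∑ j ∈ Finset.Ico i n, c j) k n hkn hnN
    rw [key_sum' b e hb c n] at h1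
    have h2 := hsum k (le_trans (Nat.cast_le.mpr hkn) hnN)
    calc ‖∑ j ∈ Finset.range k, c j • b j‖
        ≤ ‖∑ i ∈ Finset.range k, (∑ j ∈ Finset.Ico i n, c j) • e i‖
          + ‖(∑ j ∈ Finset.Ico k n, c j) • ∑ i ∈ Finset.range k, e i‖ := by
          rw [hkey]; exact norm_sub_le _ _
      _ ≤ lam * ‖∑ j ∈ Finset.range n, c j • b j‖ + |∑ j ∈ Finset.Ico k n, c j| * lam := by
          refine add_le_add h1 ?_
          rw [norm_smul, Real.norm_eq_abs]
          exact mul_le_mul_of_nonneg_left h2 (abs_nonneg _)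
      _ ≤ 2 * (8*lam^3) * ‖∑ j ∈ Finset.range n, c j • b j‖ := by
          nlinarith [norm_nonneg (∑ j ∈ Finset.range n, c j • b j),
            abs_nonneg (∑ j ∈ Finset.Ico k n, c j),
            mul_le_mul_of_nonneg_right hTb hl0.le,
            mul_nonneg (show (0:ℝ) ≤ 2*(8*lam^3) - lam - 2*lam^3 by linarith)
              (norm_nonneg (∑ j ∈ Finset.range n, c j • b j))]
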